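/- Pushforward of controlled Hilbert spaces preserves the operator conditions: Let f : X → X' be a morphism of bornological coarse spaces and (H,φ) an X-controlled Hilbert space; let f* : C(X') → C(X) be given by f*(g) := g ∘ f and set φ' := φ ∘ f*. Then (H,φ') is an X'-controlled Hilbert space, and for every bounded operator A on H: (1) if A has controlled propagation with respect to (X,φ) then A has controlled propagation with respect to (X',φ'); (2) if A is quasi-local with respect to (X,φ) then A is quasi-local with respect to (X',φ'); (3) if A is locally compact with respect to (X,φ) then A is locally compact with respect to (X',φ'); and (4) every locally finite subspace of (H,φ) is a locally finite subspace of (H,φ'). -/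

import Mathlib

/-- The `U`-thickening `U[B] := {x : ∃ b ∈ B, (x, b) ∈ U}` of a subset `B` by an
entourage `U`. -/
def thick {X : Type*} (U : Set (X × X)) (B : Set X) : Set X :=
  {x | ∃ b ∈ B, (x, b) ∈ U}

/-- Composition of relations: `U ∘ V`. -/
def relComp {X : Type*} (U V : Set (X × X)) : Set (X × X) :=
  {p | ∃ z, (p.1, z) ∈ U ∧ (z, p.2) ∈ V}

/-- `iterComp U n` is the `(n+1)`-fold composition `U ∘ U ∘ ⋯ ∘ U`. -/
def iterComp {X : Type*} (U : Set (X × X)) : ℕ → Set (X × X)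
  | 0 => U
  | n + 1 => relComp (iterComp U n) U

/-- A bornological coarse structure on a set `X`: a coarse structure (a collection of
entourages containing the diagonal and closed under subsets, finite unions, inverses and
compositions) together with a compatible bornology (a collection of bounded sets covering
`X` and closed under subsets and finite unions, such that controlled thickenings of bounded
sets are bounded). -/
structure BornCoarse (X : Type*) where
  /-- the entourages -/
  entourages : Set (Set (X × X))
  diag_mem : {p : X × X | p.1 = p.2} ∈ entourages
  subset_mem : ∀ ⦃U V : Set (X × X)⦄, U ∈ entourages → V ⊆ U → V ∈ entourages
  union_mem : ∀ ⦃U V : Set (X × X)⦄, U ∈ entourages → V ∈ entourages → U ∪ V ∈ entourages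
  inv_mem : ∀ ⦃U : Set (X × X)⦄, U ∈ entourages → {p : X × X | (p.2, p.1) ∈ U} ∈ entourages
  comp_mem : ∀ ⦃U V : Set (X × X)⦄, U ∈ entourages → V ∈ entourages →
    relComp U V ∈ entourages
  /-- the bounded subsets -/
  bounded : Set (Set X)
  covers : ∀ x : X, ∃ B ∈ bounded, x ∈ B
  empty_mem : (∅ : Set X) ∈ bounded
  bounded_subset : ∀ ⦃B C : Set X⦄, B ∈ bounded → C ⊆ B → C ∈ bounded
  bounded_union : ∀ ⦃B C : Set X⦄, B ∈ bounded → C ∈ bounded → B ∪ C ∈ bounded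
  compat : ∀ ⦃U : Set (X × X)⦄ ⦃B : Set X⦄, U ∈ entourages → B ∈ bounded →
    thick U B ∈ bounded

/-- A map between bornological coarse spaces is controlled if it maps entourages to
entourages. -/
def IsControlled {X X' : Type*} (S : BornCoarse X) (S' : BornCoarse X') (f : X → X') :
    Prop :=
  ∀ U ∈ S.entourages, (fun p : X × X => (f p.1, f p.2)) '' U ∈ S'.entourages

/-- A map between bornological coarse spaces is proper if preimages of bounded sets are
bounded. -/
def IsProper {X X' : Type*} (S : BornCoarse X) (S' : BornCoarse X') (f : X → X') : Prop :=
  ∀ B ∈ S'.bounded, f ⁻¹' B ∈ S.bounded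

/-- A morphism of bornological coarse spaces is a controlled and proper map. -/
def IsMorphism {X X' : Type*} (S : BornCoarse X) (S' : BornCoarse X') (f : X → X') : Prop :=
  IsControlled S S' f ∧ IsProper S S' f

noncomputable section

/-- The characteristic function of `B ⊆ X` as a bounded (continuous) function on the
discrete space `X`. -/
def chi {X : Type*} [TopologicalSpace X] [DiscreteTopology X] (B : Set X) :
    BoundedContinuousFunction X ℂ :=
  BoundedContinuousFunction.ofNormedAddCommGroup (B.indicator fun _ => (1 : ℂ))
    continuous_of_discreteTopology 1 fun x => by
      by_cases hx : x ∈ B <;> simp [Set.indicator_apply, hx]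

/-- A unital `*`-homomorphism from the `C*`-algebra `C(X)` of bounded functions on the
discrete space `X` into the bounded operators on the Hilbert space `H`. -/
abbrev CtrlRep (X : Type*) [TopologicalSpace X] [DiscreteTopology X] (H : Type*)
    [NormedAddCommGroup H] [InnerProductSpace ℂ H] [CompleteSpace H] :=
  BoundedContinuousFunction X ℂ →⋆ₐ[ℂ] (H →L[ℂ] H)

section

variable {X : Type*} [TopologicalSpace X] [DiscreteTopology X]
variable {H : Type*} [NormedAddCommGroup H] [InnerProductSpace ℂ H] [CompleteSpace H]
variable {H' : Type*} [NormedAddCommGroup H'] [InnerProductSpace ℂ H'] [CompleteSpace H']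

/-- `H(B) = φ(χ_B)H`, the subspace of vectors supported on `B`. -/
def Hsub (φ : CtrlRep X H) (B : Set X) : Set H :=
  Set.range ⇑(φ (chi B))

/-- `(H, φ)` is an `X`-controlled Hilbert space: `H(B)` is separable for every bounded
subset `B`. -/
def IsControlledHilbert (S : BornCoarse X) (φ : CtrlRep X H) : Prop :=
  ∀ B ∈ S.bounded, TopologicalSpace.IsSeparable (Hsub φ B)

/-- A bounded operator has controlled propagation if there is an entourage `U` with
`A(H(B)) ⊆ H'(U[B])` for every bounded `B`. -/
def HasCtrlProp (S : BornCoarse X) (φ : CtrlRep X H) (φ' : CtrlRep X H')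
    (A : H →L[ℂ] H') : Prop :=
  ∃ U ∈ S.entourages, ∀ B ∈ S.bounded, ⇑A '' Hsub φ B ⊆ Hsub φ' (thick U B)

/-- A bounded operator is quasi-local if there is an entourage `U` such that for every
`ε > 0` there is `n` with `‖φ'(χ_{B'}) A φ(χ_B)‖ ≤ ε` for all `Uⁿ`-separated `B, B'`. -/
def IsQuasiLocal (S : BornCoarse X) (φ : CtrlRep X H) (φ' : CtrlRep X H')
    (A : H →L[ℂ] H') : Prop :=
  ∃ U ∈ S.entourages, ∀ ε : ℝ, 0 < ε → ∃ n : ℕ, ∀ B B' : Set X,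
    thick (iterComp U n) B ∩ thick (iterComp U n) B' = ∅ →
      ‖φ' (chi B') ∘L A ∘L φ (chi B)‖ ≤ ε

/-- A bounded operator is locally compact if `φ(χ_B)A` and `Aφ(χ_B)` are compact for every
bounded `B`. -/
def IsLocallyCompactOp (S : BornCoarse X) (φ : CtrlRep X H) (A : H →L[ℂ] H) : Prop :=
  ∀ B ∈ S.bounded,
    IsCompactOperator ⇑(φ (chi B) ∘L A) ∧ IsCompactOperator ⇑(A ∘L φ (chi B))

/-- A controlled Hilbert space is locally finite if `H(B)` is finite-dimensional for every
bounded `B`. -/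
def IsLocallyFiniteRep (S : BornCoarse X) (φ : CtrlRep X H) : Prop :=
  ∀ B ∈ S.bounded, FiniteDimensional ℂ ↥(LinearMap.range (φ (chi B) : H →ₗ[ℂ] H))

/-- A controlled Hilbert space is ample if there is an entourage `U` such that `H(U[x])` is
infinite-dimensional for every point `x`. -/
def IsAmple (S : BornCoarse X) (φ : CtrlRep X H) : Prop :=
  ∃ U ∈ S.entourages, ∀ x : X,
    ¬FiniteDimensional ℂ ↥(LinearMap.range (φ (chi (thick U {x})) : H →ₗ[ℂ] H))

/-- A closed subspace `K ⊆ H` is a locally finite subspace if it carries an `X`-control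
making it a locally finite `X`-controlled Hilbert space such that the inclusion `K → H`
has controlled propagation. -/
def IsLocFinSubspace (S : BornCoarse X) (φ : CtrlRep X H) (K : Submodule ℂ H) : Prop :=
  ∃ hK : IsClosed (K : Set H),
    haveI : CompleteSpace K := hK.completeSpace_coe
    ∃ ψ : CtrlRep X ↥K, IsControlledHilbert S ψ ∧ IsLocallyFiniteRep S ψ ∧
      HasCtrlProp S ψ φ K.subtypeL

end

end

noncomputable section

/-- Precomposition `f* : C(X') → C(X)`, `g ↦ g ∘ f`, as a unital `*`-homomorphism of the
algebras of bounded functions on the discrete spaces `X` and `X'`. -/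
def precompSAH {X X' : Type*} [TopologicalSpace X] [DiscreteTopology X]
    [TopologicalSpace X'] [DiscreteTopology X'] (f : X → X') :
    BoundedContinuousFunction X' ℂ →⋆ₐ[ℂ] BoundedContinuousFunction X ℂ where
  toFun g := g.compContinuous ⟨f, continuous_of_discreteTopology⟩
  map_one' := rfl
  map_mul' _ _ := rfl
  map_zero' := rfl
  map_add' _ _ := rfl
  commutes' _ := rfl
  map_star' _ := rfl

/-- The pushforward `f_* (H, φ) = (H, φ ∘ f*)` of an `X`-controlled Hilbert space along a
map `f : X → X'`. -/
def pushforward {X X' : Type*} [TopologicalSpace X] [DiscreteTopology X]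
    [TopologicalSpace X'] [DiscreteTopology X'] (f : X → X')
    {H : Type*} [NormedAddCommGroup H] [InnerProductSpace ℂ H] [CompleteSpace H]
    (φ : CtrlRep X H) : CtrlRep X' H :=
  φ.comp (precompSAH f)

section Aux

variable {X X' : Type*} [TopologicalSpace X] [DiscreteTopology X]
  [TopologicalSpace X'] [DiscreteTopology X']

lemma precomp_chi (f : X → X') (B : Set X') :
    precompSAH f (chi B) = chi (f ⁻¹' B) := by
  ext x
  show chi B (f x) = chi (f ⁻¹' B) x
  by_cases hx : f x ∈ B <;>
    simp [precompSAH, chi, Set.indicator_apply, hx]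

variable {H : Type*} [NormedAddCommGroup H] [InnerProductSpace ℂ H] [CompleteSpace H]

lemma pushforward_chi (f : X → X') (φ : CtrlRep X H) (B : Set X') :
    pushforward f φ (chi B) = φ (chi (f ⁻¹' B)) := by
  simp [pushforward, precomp_chi]

lemma chi_mul_chi {B C : Set X} (h : C ⊆ B) : chi B * chi C = chi C := by
  ext x
  by_cases hx : x ∈ C
  · simp [chi, Set.indicator_apply, hx, h hx]
  · simp [chi, Set.indicator_apply, hx]

lemma Hsub_mono (φ : CtrlRep X H) {B C : Set X} (h : C ⊆ B) :
    Hsub φ C ⊆ Hsub φ B := by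
  rintro _ ⟨v, rfl⟩
  refine ⟨φ (chi C) v, ?_⟩
  rw [← ContinuousLinearMap.mul_apply, ← map_mul, chi_mul_chi h]

lemma Hsub_push (f : X → X') (φ : CtrlRep X H) (B : Set X') :
    Hsub (pushforward f φ) B = Hsub φ (f ⁻¹' B) := by
  unfold Hsub
  rw [pushforward_chi]

lemma iterComp_image (f : X → X') (U : Set (X × X)) (n : ℕ) {a b : X}
    (h : (a, b) ∈ iterComp U n) :
    (f a, f b) ∈ iterComp ((fun p : X × X => (f p.1, f p.2)) '' U) n := by
  induction n generalizing b with
  | zero => exact ⟨(a, b), h, rfl⟩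
  | succ n ih =>
    obtain ⟨z, hz1, hz2⟩ := h
    exact ⟨f z, ih hz1, ⟨(z, b), hz2, rfl⟩⟩

lemma thick_pre_subset (f : X → X') (U : Set (X × X)) (B : Set X') :
    thick U (f ⁻¹' B) ⊆ f ⁻¹' thick ((fun p : X × X => (f p.1, f p.2)) '' U) B := by
  rintro x ⟨b, hb, hxb⟩
  exact ⟨f b, hb, ⟨(x, b), hxb, rfl⟩⟩

variable {H' : Type*} [NormedAddCommGroup H'] [InnerProductSpace ℂ H'] [CompleteSpace H']

lemma hasCtrlProp_push (S : BornCoarse X) (S' : BornCoarse X') (f : X → X')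
    (hf : IsMorphism S S' f) (φ : CtrlRep X H) (φ' : CtrlRep X H') (A : H →L[ℂ] H')
    (hA : HasCtrlProp S φ φ' A) :
    HasCtrlProp S' (pushforward f φ) (pushforward f φ') A := by
  obtain ⟨U, hU, h⟩ := hA
  refine ⟨_, hf.1 U hU, fun B hB => ?_⟩
  rw [Hsub_push, Hsub_push]
  refine (Set.image_mono le_rfl).trans ((h _ (hf.2 B hB)).trans ?_)
  exact Hsub_mono φ' (thick_pre_subset f U B)

lemma isControlledHilbert_push (S : BornCoarse X) (S' : BornCoarse X') (f : X → X')
    (hf : IsMorphism S S' f) (φ : CtrlRep X H) (hφ : IsControlledHilbert S φ) :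
    IsControlledHilbert S' (pushforward f φ) := by
  intro B hB
  rw [Hsub_push]
  exact hφ _ (hf.2 B hB)

end Aux

/-- Pushforward of controlled Hilbert spaces along a morphism preserves the operator
conditions: `(H, φ ∘ f*)` is an `X'`-controlled Hilbert space, and controlled propagation,
quasi-locality, local compactness of operators and local finiteness of subspaces are
preserved. -/
theorem pushforward_controlledHilbert {X X' : Type*} [TopologicalSpace X]
    [DiscreteTopology X] [TopologicalSpace X'] [DiscreteTopology X']
    (S : BornCoarse X) (S' : BornCoarse X') (f : X → X') (hf : IsMorphism S S' f)
    {H : Type*} [NormedAddCommGroup H] [InnerProductSpace ℂ H] [CompleteSpace H]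
    (φ : CtrlRep X H) (hφ : IsControlledHilbert S φ) :
    IsControlledHilbert S' (pushforward f φ) ∧
    (∀ A : H →L[ℂ] H, HasCtrlProp S φ φ A →
      HasCtrlProp S' (pushforward f φ) (pushforward f φ) A) ∧
    (∀ A : H →L[ℂ] H, IsQuasiLocal S φ φ A →
      IsQuasiLocal S' (pushforward f φ) (pushforward f φ) A) ∧
    (∀ A : H →L[ℂ] H, IsLocallyCompactOp S φ A →
      IsLocallyCompactOp S' (pushforward f φ) A) ∧
    ∀ K : Submodule ℂ H, IsLocFinSubspace S φ K →
      IsLocFinSubspace S' (pushforward f φ) K := by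
  refine ⟨isControlledHilbert_push S S' f hf φ hφ,
    fun A hA => hasCtrlProp_push S S' f hf φ φ A hA, ?_, ?_, ?_⟩
  · rintro A ⟨U, hU, h⟩
    refine ⟨_, hf.1 U hU, fun ε hε => ?_⟩
    obtain ⟨n, hn⟩ := h ε hε
    refine ⟨n, fun B B' hsep => ?_⟩
    rw [pushforward_chi, pushforward_chi]
    refine hn _ _ ?_
    by_contra hne
    obtain ⟨x, hx1, hx2⟩ := Set.nonempty_iff_ne_empty.2 hne
    obtain ⟨b, hb, hxb⟩ := hx1
    obtain ⟨b', hb', hxb'⟩ := hx2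
    have : f x ∈ thick (iterComp ((fun p : X × X => (f p.1, f p.2)) '' U) n) B ∩
        thick (iterComp ((fun p : X × X => (f p.1, f p.2)) '' U) n) B' :=
      ⟨⟨f b, hb, iterComp_image f U n hxb⟩, ⟨f b', hb', iterComp_image f U n hxb'⟩⟩
    rw [hsep] at this
    exact this
  · intro A hA B hB
    rw [pushforward_chi]
    exact hA _ (hf.2 B hB)
  · rintro K ⟨hK, ψ, h1, h2, h3⟩
    haveI : CompleteSpace K := hK.completeSpace_coe
    refine ⟨hK, pushforward f ψ, isControlledHilbert_push S S' f hf ψ h1,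
      fun B hB => ?_, hasCtrlProp_push S S' f hf ψ φ K.subtypeL h3⟩
    rw [pushforward_chi]
    exact h2 _ (hf.2 B hB)

end
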